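/- Let f be a nonconstant holomorphic function on the unit disc with f(0) = 0 and f'(0) = 1 whose zero set is {0} ∪ Z with 0 < |ζ| for ζ ∈ Z, and suppose sup_{0<r<1} (1/2π)∫_0^{2π} log⁺|f(re^{iθ})| dθ ≤ M < ∞. Then Σ_{ζ∈Z} (1 - |ζ|) ≤ M. -/

import Mathlib

open Metric Complex

lemma mprod_diff (φ : ℂ → ℂ → ℂ) (hφ : ∀ ζ, Differentiable ℂ (φ ζ)) (L : Multiset ℂ) :
    Differentiable ℂ (fun z => (L.map (fun ζ => φ ζ z)).prod) := by
  induction L using Multiset.induction_on with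
  | empty => simpa using differentiable_const 1
  | cons a s ih =>
    simp only [Multiset.map_cons, Multiset.prod_cons]
    exact (hφ a).mul ih

lemma mnorm_prod (L : Multiset ℂ) : ‖L.prod‖ = (L.map (fun z => ‖z‖)).prod := by
  induction L using Multiset.induction_on with
  | empty => simp
  | cons a s ih => simp [norm_mul, ih]

lemma mlog_prod (L : Multiset ℝ) (h : ∀ x ∈ L, x ≠ 0) :
    Real.log L.prod = (L.map Real.log).sum := by
  induction L using Multiset.induction_on with
  | empty => simp
  | cons a s ih =>
    simp only [Multiset.prod_cons, Multiset.map_cons, Multiset.sum_cons]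
    rw [Real.log_mul (h a (Multiset.mem_cons_self a s)) ?_, ih (fun x hx => h x (Multiset.mem_cons_of_mem hx))]
    exact Multiset.prod_ne_zero fun h0 => h 0 (Multiset.mem_cons_of_mem h0) rfl

lemma zeros_finite {g : ℂ → ℂ} (hg : DifferentiableOn ℂ g (ball (0:ℂ) 1))
    {z₁ : ℂ} (hz₁ : z₁ ∈ ball (0:ℂ) 1) (hgz₁ : g z₁ ≠ 0) {ρ : ℝ} (hρ : ρ < 1) :
    {z | z ∈ closedBall (0:ℂ) ρ ∧ g z = 0}.Finite := by
  by_contra hinf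
  obtain ⟨x, hxK, hx⟩ := (show Set.Infinite _ from hinf).exists_accPt_of_subset_isCompact
    (isCompact_closedBall (0:ℂ) ρ) (fun z hz => hz.1)
  have hxb : x ∈ ball (0:ℂ) 1 := by
    simp only [mem_closedBall, mem_ball] at hxK ⊢; linarith
  have heq : Set.EqOn g 0 (ball (0:ℂ) 1) :=
    (hg.analyticOnNhd isOpen_ball).eqOn_zero_of_preconnected_of_frequently_eq_zero
      ((convex_ball _ _).isPreconnected) hxb ?_
  · exact hgz₁ (heq hz₁)
  · have h2 := accPt_iff_frequently.mp hx
    rw [frequently_nhdsWithin_iff]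
    exact h2.mono (fun z hz => ⟨hz.2.2, hz.1⟩)

open scoped Classical in
noncomputable def ordNat (g : ℂ → ℂ) (w : ℂ) : ℕ :=
  if h : AnalyticAt ℂ g w then (analyticOrderAt g w).toNat else 0

lemma ordNat_eq {g : ℂ → ℂ} {w : ℂ} (h : AnalyticAt ℂ g w) : ordNat g w = (analyticOrderAt g w).toNat := by
  simp only [ordNat, dif_pos h]

lemma order_ne_top {g : ℂ → ℂ} (hg : DifferentiableOn ℂ g (ball (0:ℂ) 1))
    {z₁ : ℂ} (hz₁ : z₁ ∈ ball (0:ℂ) 1) (hgz₁ : g z₁ ≠ 0) {w : ℂ} (hw : w ∈ ball (0:ℂ) 1) :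
    (analyticOrderAt g w) ≠ ⊤ := by
  intro htop
  rw [analyticOrderAt_eq_top] at htop
  have heq : Set.EqOn g 0 (ball (0:ℂ) 1) :=
    (hg.analyticOnNhd isOpen_ball).eqOn_zero_of_preconnected_of_frequently_eq_zero
      ((convex_ball _ _).isPreconnected) hw
      ((htop.filter_mono nhdsWithin_le_nhds).frequently)
  exact hgz₁ (heq hz₁)

lemma order_eq_ordNat {g : ℂ → ℂ} (hg : DifferentiableOn ℂ g (ball (0:ℂ) 1))
    {z₁ : ℂ} (hz₁ : z₁ ∈ ball (0:ℂ) 1) (hgz₁ : g z₁ ≠ 0) {w : ℂ} (hw : w ∈ ball (0:ℂ) 1) :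
    (analyticOrderAt g w) = (ordNat g w : ℕ∞) := by
  rw [ordNat_eq (hg.analyticOnNhd isOpen_ball w hw)]
  exact (ENat.coe_toNat (order_ne_top hg hz₁ hgz₁ hw)).symm

lemma ordNat_dslope {g : ℂ → ℂ} (hg : DifferentiableOn ℂ g (ball (0:ℂ) 1))
    {z₁ : ℂ} (hz₁ : z₁ ∈ ball (0:ℂ) 1) (hgz₁ : g z₁ ≠ 0)
    {ζ : ℂ} (hζ : ζ ∈ ball (0:ℂ) 1) (hgζ : g ζ = 0)
    {w : ℂ} (hw : w ∈ ball (0:ℂ) 1) :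
    ordNat g w = ordNat (dslope g ζ) w + (if w = ζ then 1 else 0) := by
  classical
  set g₁ := dslope g ζ with hg₁def
  have hg₁ : DifferentiableOn ℂ g₁ (ball (0:ℂ) 1) :=
    (Complex.differentiableOn_dslope (isOpen_ball.mem_nhds hζ)).mpr hg
  have hid : ∀ z, g z = (z - ζ) * g₁ z := by
    intro z
    have h1 := sub_smul_dslope g ζ z
    rw [hgζ, sub_zero, smul_eq_mul] at h1
    exact h1.symm
  have hg₁z₁ : g₁ z₁ ≠ 0 := by
    intro h0
    apply hgz₁; rw [hid z₁, h0, mul_zero]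
  have ha : AnalyticAt ℂ g w := hg.analyticOnNhd isOpen_ball w hw
  have ha₁ : AnalyticAt ℂ g₁ w := hg₁.analyticOnNhd isOpen_ball w hw
  set n := ordNat g w with hndef
  have hn : analyticOrderAt g w = (n : ℕ∞) := order_eq_ordNat hg hz₁ hgz₁ hw
  obtain ⟨u, hu, hu0, huev⟩ := (ha.analyticOrderAt_eq_natCast (n := n)).mp hn
  by_cases hwζ : w = ζ
  · subst hwζ
    -- n ≥ 1
    have hn1 : 1 ≤ n := by
      rcases Nat.eq_zero_or_pos n with h0 | h1
      · exfalso
        have := huev.self_of_nhds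
        rw [h0, pow_zero, one_smul] at this
        exact hu0 (this ▸ hgζ)
      · exact h1
    -- punctured equality
    have hpunct : ∀ᶠ z in nhdsWithin w {w}ᶜ, g₁ z = (z - w) ^ (n - 1) • u z := by
      filter_upwards [eventually_nhdsWithin_of_eventually_nhds huev,
        self_mem_nhdsWithin] with z hz hzne
      have hzw : z - w ≠ 0 := sub_ne_zero.mpr hzne
      have h2 : (z - w) * g₁ z = (z - w) * ((z - w) ^ (n - 1) • u z) := by
        rw [← hid z, hz]
        rw [smul_eq_mul, smul_eq_mul, ← mul_assoc, ← pow_succ']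
        congr 2
        omega
      exact mul_left_cancel₀ hzw h2
    have hcont1 : ContinuousAt g₁ w :=
      continuousAt_dslope_same.mpr (hg.differentiableAt (isOpen_ball.mem_nhds hζ))
    have hcont2 : ContinuousAt (fun z => (z - w) ^ (n - 1) • u z) w :=
      (((continuousAt_id.sub continuousAt_const).pow _).smul hu.continuousAt)
    have hpt : g₁ w = (w - w) ^ (n - 1) • u w := by
      have t1 : Filter.Tendsto g₁ (nhdsWithin w {w}ᶜ) (nhds (g₁ w)) :=
        hcont1.tendsto.mono_left nhdsWithin_le_nhds
      have t2 : Filter.Tendsto g₁ (nhdsWithin w {w}ᶜ) (nhds ((w - w) ^ (n - 1) • u w)) :=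
        (hcont2.tendsto.mono_left nhdsWithin_le_nhds).congr' (hpunct.mono (fun z hz => hz.symm))
      exact tendsto_nhds_unique t1 t2
    have hev1 : ∀ᶠ z in nhds w, g₁ z = (z - w) ^ (n - 1) • u z := by
      rw [eventually_nhdsWithin_iff] at hpunct
      filter_upwards [hpunct] with z hz
      by_cases hzw : z = w
      · subst hzw; exact hpt
      · exact hz hzw
    have : analyticOrderAt g₁ w = ((n - 1 : ℕ) : ℕ∞) :=
      (ha₁.analyticOrderAt_eq_natCast (n := n - 1)).mpr ⟨u, hu, hu0, hev1⟩
    rw [ordNat_eq ha₁, this, if_pos rfl]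
    simp only [ENat.toNat_coe]
    omega
  · have hev1 : ∀ᶠ z in nhds w, g₁ z = (z - w) ^ n • ((z - ζ)⁻¹ * u z) := by
      filter_upwards [huev, eventually_ne_nhds hwζ] with z hz hzζ
      have hzζ' : z - ζ ≠ 0 := sub_ne_zero.mpr hzζ
      have := hid z
      rw [hz] at this
      rw [smul_eq_mul] at this ⊢
      rw [eq_comm, ← mul_assoc, mul_comm ((z - w) ^ n), mul_assoc, this, ← mul_assoc, inv_mul_cancel₀ hzζ', one_mul]
    have : analyticOrderAt g₁ w = (n : ℕ∞) := by
      refine (ha₁.analyticOrderAt_eq_natCast (n := n)).mpr ⟨fun z => (z - ζ)⁻¹ * u z, ?_, ?_, hev1⟩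
      · exact ((analyticAt_id.sub analyticAt_const).inv (sub_ne_zero.mpr hwζ)).mul hu
      · simp only [mul_ne_zero_iff]
        exact ⟨inv_ne_zero (sub_ne_zero.mpr hwζ), hu0⟩
    rw [ordNat_eq ha₁, this, if_neg hwζ]
    simp

lemma remove_zeros {r : ℝ} (hr1 : r < 1) :
    ∀ (N : ℕ) (g : ℂ → ℂ) (S : Finset ℂ),
      DifferentiableOn ℂ g (ball (0:ℂ) 1) →
      (∃ z₁ ∈ ball (0:ℂ) 1, g z₁ ≠ 0) →
      (∀ z ∈ S, z ∈ closedBall (0:ℂ) r) →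
      (∀ z ∈ closedBall (0:ℂ) r, g z = 0 → z ∈ S) →
      S.sum (ordNat g) ≤ N →
      ∃ (L : Multiset ℂ) (h : ℂ → ℂ), (∀ ζ ∈ L, ζ ∈ closedBall (0:ℂ) r) ∧
        DifferentiableOn ℂ h (ball (0:ℂ) 1) ∧ (∀ z ∈ closedBall (0:ℂ) r, h z ≠ 0) ∧
        ∀ z, g z = ((L.map (fun ζ => z - ζ)).prod) * h z := by
  intro N
  induction N with
  | zero =>
    intro g S hg ⟨z₁, hz₁, hgz₁⟩ hSsub hSin hsum
    by_cases hno : ∀ z ∈ closedBall (0:ℂ) r, g z ≠ 0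
    · exact ⟨0, g, by simp, hg, hno, fun z => by simp⟩
    · exfalso
      push_neg at hno
      obtain ⟨ζ, hζr, hgζ⟩ := hno
      have hζS : ζ ∈ S := hSin ζ hζr hgζ
      have hζb : ζ ∈ ball (0:ℂ) 1 := by
        simp only [mem_closedBall, mem_ball] at hζr ⊢
        linarith
      have h1 : 1 ≤ ordNat g ζ := by
        rw [ordNat_dslope hg hz₁ hgz₁ hζb hgζ hζb, if_pos rfl]
        omega
      have h2 := Finset.single_le_sum (f := ordNat g) (fun i _ => Nat.zero_le _) hζS
      have h3 : ∑ x ∈ S, ordNat g x ≤ 0 := hsum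
      omega
  | succ N ih =>
    intro g S hg hex hSsub hSin hsum
    obtain ⟨z₁, hz₁, hgz₁⟩ := hex
    by_cases hno : ∀ z ∈ closedBall (0:ℂ) r, g z ≠ 0
    · exact ⟨0, g, by simp, hg, hno, fun z => by simp⟩
    · push_neg at hno
      obtain ⟨ζ, hζr, hgζ⟩ := hno
      have hζS : ζ ∈ S := hSin ζ hζr hgζ
      have hζb : ζ ∈ ball (0:ℂ) 1 := by
        simp only [mem_closedBall, mem_ball] at hζr ⊢
        linarith
      set g₁ := dslope g ζ with hg₁def
      have hg₁ : DifferentiableOn ℂ g₁ (ball (0:ℂ) 1) :=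
        (Complex.differentiableOn_dslope (isOpen_ball.mem_nhds hζb)).mpr hg
      have hid : ∀ z, g z = (z - ζ) * g₁ z := by
        intro z
        have h1 := sub_smul_dslope g ζ z
        rw [hgζ, sub_zero, smul_eq_mul] at h1
        exact h1.symm
      have hg₁z₁ : g₁ z₁ ≠ 0 := fun h0 => hgz₁ (by rw [hid z₁, h0, mul_zero])
      have hsum1 : S.sum (ordNat g₁) + 1 ≤ S.sum (ordNat g) := by
        classical
        have : S.sum (ordNat g) = S.sum (fun w => ordNat g₁ w + (if w = ζ then 1 else 0)) := by
          refine Finset.sum_congr rfl fun w hwS => ?_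
          have hwb : w ∈ ball (0:ℂ) 1 := by
            have := hSsub w hwS
            simp only [mem_closedBall, mem_ball] at this ⊢
            linarith
          exact ordNat_dslope hg hz₁ hgz₁ hζb hgζ hwb
        rw [this, Finset.sum_add_distrib, Finset.sum_ite_eq' S ζ (fun _ => 1), if_pos hζS]
      obtain ⟨L₁, h, hL₁, hh, hhne, hfac⟩ :=
        ih g₁ S hg₁ ⟨z₁, hz₁, hg₁z₁⟩ hSsub
          (fun z hz hz0 => hSin z hz (by rw [hid z, hz0, mul_zero])) (by omega)
      refine ⟨ζ ::ₘ L₁, h, ?_, hh, hhne, ?_⟩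
      · intro x hx
        rcases Multiset.mem_cons.mp hx with h | h
        · exact h ▸ hζr
        · exact hL₁ x h
      · intro z
        rw [hid z, hfac z, Multiset.map_cons, Multiset.prod_cons, mul_assoc]

lemma log_mean {g : ℂ → ℂ} {R r : ℝ} (hr : 0 < r) (hrR : r < R)
    (hg : DifferentiableOn ℂ g (ball (0:ℂ) R))
    (hnz : ∀ z ∈ ball (0:ℂ) R, g z ≠ 0) :
    ∫ θ in (0:ℝ)..(2*Real.pi), Real.log ‖g (circleMap 0 r θ)‖
      = 2 * Real.pi * Real.log ‖g 0‖ := by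
  have hR0 : 0 < R := lt_trans hr hrR
  have hg0 : g 0 ≠ 0 := hnz 0 (mem_ball_self hR0)
  set q : ℂ → ℂ := fun z => deriv g z / g z with hqdef
  have hgan : AnalyticOnNhd ℂ g (ball (0:ℂ) R) := hg.analyticOnNhd isOpen_ball
  have hq : DifferentiableOn ℂ q (ball (0:ℂ) R) :=
    (hgan.deriv.div hgan hnz).differentiableOn
  set R₁ : ℝ := (r + R) / 2 with hR₁def
  set t : ℝ := (r + R₁) / 2 with htdef
  have hrt : r < t := by simp only [htdef, hR₁def]; linarith
  have htR₁ : t < R₁ := by simp only [htdef, hR₁def]; linarith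
  have hR₁R : R₁ < R := by simp only [hR₁def]; linarith
  have ht0 : 0 < t := lt_trans hr hrt
  have hR₁0 : 0 < R₁ := lt_trans ht0 htR₁
  set Rn : NNReal := ⟨R₁, hR₁0.le⟩ with hRndef
  set tn : NNReal := ⟨t, ht0.le⟩ with htndef
  have hsub : closedBall (0:ℂ) (Rn:ℝ) ⊆ ball (0:ℂ) R := by
    intro z hz
    simp only [mem_closedBall, mem_ball] at hz ⊢
    calc dist z 0 ≤ R₁ := hz
    _ < R := hR₁R
  have hp := (hq.mono hsub).hasFPowerSeriesOnBall (show (0:NNReal) < Rn from hR₁0)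
  set p := cauchyPowerSeries q 0 (Rn:ℝ) with hpdef
  have htrad : (tn : ENNReal) < p.radius :=
    lt_of_lt_of_le (by exact_mod_cast htR₁) hp.r_le
  have hsummable : Summable (fun n => ‖p n‖ * (t:ℝ) ^ n) := by
    have h := p.summable_norm_mul_pow htrad
    rwa [show ((tn:NNReal):ℝ) = t from rfl] at h
  set a : ℕ → ℂ := fun n => p.coeff n with hadef
  have ha : ∀ n, ‖a n‖ ≤ ‖p n‖ := by
    intro n
    have h1 := (p n).le_opNorm (fun _ => 1)
    have h2 : (∏ _i : Fin n, ‖(1:ℂ)‖) = 1 := by simp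
    rw [h2, mul_one] at h1
    exact h1
  set G : ℕ → ℂ → ℂ := fun n z => (a n / ((n : ℂ) + 1)) * z ^ (n + 1) with hGdef
  set G' : ℕ → ℂ → ℂ := fun n z => a n * z ^ n with hG'def
  have hG : ∀ (n : ℕ) (y : ℂ), HasDerivAt (G n) (G' n y) y := by
    intro n y
    have h1 := (hasDerivAt_pow (n + 1) y).const_mul (a n / ((n : ℂ) + 1))
    refine h1.congr_deriv ?_
    have hn0 : ((n : ℂ) + 1) ≠ 0 := Nat.cast_add_one_ne_zero n
    simp only [hG'def]
    push_cast
    field_simp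
  have hbound : ∀ (n : ℕ), ∀ y ∈ ball (0:ℂ) t, ‖G' n y‖ ≤ ‖p n‖ * t ^ n := by
    intro n y hy
    simp only [mem_ball, dist_zero_right] at hy
    simp only [hG'def, norm_mul, norm_pow]
    exact mul_le_mul (ha n) (pow_le_pow_left₀ (norm_nonneg y) hy.le n)
      (by positivity) (norm_nonneg _)
  have hG0 : ∀ n, G n 0 = 0 := by
    intro n; simp [hGdef]
  have hsum0 : Summable (fun n => G n 0) := by
    simp only [hG0]; exact summable_zero
  set L : ℂ → ℂ := fun z => ∑' n, G n z with hLdef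
  have hL : ∀ y ∈ ball (0:ℂ) t, HasDerivAt L (∑' n, G' n y) y := fun y hy =>
    hasDerivAt_tsum_of_isPreconnected hsummable isOpen_ball
      ((convex_ball _ _).isPreconnected) (fun n y _ => hG n y) hbound
      (mem_ball_self ht0) hsum0 hy
  have htsum : ∀ y ∈ ball (0:ℂ) t, (∑' n, G' n y) = q y := by
    intro y hy
    simp only [mem_ball, dist_zero_right] at hy
    have hy' : y ∈ EMetric.ball (0:ℂ) (Rn : ENNReal) := by
      show y ∈ Metric.eball _ _
      rw [Metric.mem_eball, edist_zero_right]
      have h3 : ‖y‖ < R₁ := hy.trans htR₁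
      have h4 : ‖y‖₊ < Rn := by rw [← NNReal.coe_lt_coe]; exact h3
      exact_mod_cast h4
    have := hp.hasSum hy'
    simp only [zero_add] at this
    have h2 : HasSum (fun n => G' n y) (q y) := by
      refine this.congr_fun fun n => ?_
      rw [FormalMultilinearSeries.apply_eq_pow_smul_coeff, smul_eq_mul, mul_comm]
    exact h2.tsum_eq
  have hLq : ∀ y ∈ ball (0:ℂ) t, HasDerivAt L (q y) y := by
    intro y hy
    have := hL y hy
    rwa [htsum y hy] at this
  set φ : ℂ → ℂ := fun z => g z * cexp (-L z) with hφdef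
  have hφ' : ∀ y ∈ ball (0:ℂ) t, HasDerivAt φ 0 y := by
    intro y hy
    have hyR : y ∈ ball (0:ℂ) R := ball_subset_ball (by linarith) hy
    have hgy : HasDerivAt g (deriv g y) y :=
      (hg.differentiableAt (isOpen_ball.mem_nhds hyR)).hasDerivAt
    have hexp : HasDerivAt (fun z => cexp (-L z)) (cexp (-L y) * (-(q y))) y :=
      ((hLq y hy).neg).cexp
    have := hgy.mul hexp
    refine this.congr_deriv ?_
    have hgy0 : g y ≠ 0 := hnz y hyR
    simp only [hqdef]
    field_simp
    ring
  have hφdiff : DifferentiableOn ℂ φ (ball (0:ℂ) t) := fun y hy =>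
    ((hφ' y hy).differentiableAt).differentiableWithinAt
  have hconst : ∀ z ∈ ball (0:ℂ) t, φ z = φ 0 := by
    intro z hz
    refine (convex_ball (0:ℂ) t).is_const_of_fderivWithin_eq_zero hφdiff ?_ hz (mem_ball_self ht0)
    intro x hx
    rw [fderivWithin_of_isOpen isOpen_ball hx]
    have := (hφ' x hx).hasFDerivAt.fderiv
    rw [this]
    ext w
    simp
  have hL0 : L 0 = 0 := by
    simp only [hLdef, hG0]; exact tsum_zero
  have hφ0 : φ 0 = g 0 := by
    simp [hφdef, hL0]
  have hgexp : ∀ z ∈ ball (0:ℂ) t, g z = g 0 * cexp (L z) := by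
    intro z hz
    have h1 := hconst z hz
    rw [hφ0] at h1
    have h2 : cexp (-L z) ≠ 0 := Complex.exp_ne_zero _
    simp only [hφdef] at h1
    rw [← h1, Complex.exp_neg]
    field_simp
  -- circle integral of L is zero
  have hLdiff : DifferentiableOn ℂ L (ball (0:ℂ) t) := fun y hy =>
    ((hLq y hy).differentiableAt).differentiableWithinAt
  have hdcc : DiffContOnCl ℂ L (ball (0:ℂ) r) :=
    ⟨hLdiff.mono (ball_subset_ball hrt.le),
      hLdiff.continuousOn.mono
        (closure_ball_subset_closedBall.trans (closedBall_subset_ball hrt))⟩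
  have hcirc := hdcc.circleIntegral_sub_inv_smul (mem_ball_self hr)
  rw [hL0, smul_zero] at hcirc
  have hIint : ∫ θ in (0:ℝ)..(2*Real.pi), L (circleMap 0 r θ) = 0 := by
    have h1 : (∮ z in C(0, r), (z - 0)⁻¹ • L z)
        = ∫ θ in (0:ℝ)..(2*Real.pi), I * L (circleMap 0 r θ) := by
      simp only [circleIntegral, deriv_circleMap, smul_eq_mul, sub_zero]
      congr 1
      ext θ
      have hc0 : circleMap 0 r θ ≠ 0 := circleMap_ne_center hr.ne'
      field_simp
    rw [h1, intervalIntegral.integral_const_mul] at hcirc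
    exact (mul_eq_zero.mp hcirc).resolve_left Complex.I_ne_zero
  have hmem : ∀ θ : ℝ, circleMap 0 r θ ∈ ball (0:ℂ) t := by
    intro θ
    simp only [mem_ball, dist_zero_right]
    rw [show ‖circleMap 0 r θ‖ = |r| from by
      simpa using Complex.abs_circleMap_zero r θ]
    rwa [abs_of_pos hr]
  have hLcont : Continuous fun θ : ℝ => L (circleMap 0 r θ) :=
    hLdiff.continuousOn.comp_continuous (continuous_circleMap 0 r) hmem
  have hre : ∫ θ in (0:ℝ)..(2*Real.pi), (L (circleMap 0 r θ)).re = 0 := by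
    have h1 : (∫ θ in (0:ℝ)..(2*Real.pi), (L (circleMap 0 r θ)).re)
        = (∫ θ in (0:ℝ)..(2*Real.pi), L (circleMap 0 r θ)).re := by
      have h2 := Complex.reCLM.intervalIntegral_comp_comm
        (hLcont.intervalIntegrable (μ := MeasureTheory.volume) (0:ℝ) (2*Real.pi))
      simpa using h2
    rw [h1, hIint]
    simp
  have hpoint : ∀ θ : ℝ, Real.log ‖g (circleMap 0 r θ)‖
      = Real.log ‖g 0‖ + (L (circleMap 0 r θ)).re := by
    intro θ
    rw [hgexp _ (hmem θ)]
    rw [norm_mul]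
    rw [Real.log_mul (norm_ne_zero_iff.mpr hg0) (norm_ne_zero_iff.mpr (Complex.exp_ne_zero _))]
    congr 1
    rw [Complex.norm_exp, Real.log_exp]
  calc ∫ θ in (0:ℝ)..(2*Real.pi), Real.log ‖g (circleMap 0 r θ)‖
      = ∫ θ in (0:ℝ)..(2*Real.pi), (Real.log ‖g 0‖ + (L (circleMap 0 r θ)).re) := by
        congr 1; ext θ; exact hpoint θ
    _ = (∫ _ in (0:ℝ)..(2*Real.pi), Real.log ‖g 0‖)
        + ∫ θ in (0:ℝ)..(2*Real.pi), (L (circleMap 0 r θ)).re := by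
        have hint2 : IntervalIntegrable (fun θ => (L (circleMap 0 r θ)).re)
            MeasureTheory.volume 0 (2*Real.pi) := by
          apply Continuous.intervalIntegrable
          exact Complex.continuous_re.comp hLcont
        rw [intervalIntegral.integral_add intervalIntegrable_const hint2]
    _ = 2 * Real.pi * Real.log ‖g 0‖ := by
        rw [hre, add_zero, intervalIntegral.integral_const, sub_zero, smul_eq_mul]

lemma msum_sub (c : ℝ) (φ : ℂ → ℝ) (L : Multiset ℂ) :
    ((L.map (fun x => c - φ x)).sum) = (L.card : ℝ) * c - (L.map φ).sum := by
  induction L using Multiset.induction_on with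
  | empty => simp
  | cons a s ih => simp [ih]; ring

theorem jensen_key
    (f : ℂ → ℂ) (Z : ℕ → ℂ) (M : ℝ)
    (hf : DifferentiableOn ℂ f (ball (0 : ℂ) 1))
    (hnc : ¬ ∀ z ∈ ball (0 : ℂ) 1, f z = 0)
    (hf0 : f 0 = 0) (hf'0 : deriv f 0 = 1)
    (hZmem : ∀ n, Z n ∈ ball (0 : ℂ) 1) (hZne : ∀ n, Z n ≠ 0)
    (hZinj : Function.Injective Z)
    (hzeros : ∀ z ∈ ball (0 : ℂ) 1, (f z = 0 ↔ z = 0 ∨ z ∈ Set.range Z))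
    (hM : ∀ r : ℝ, 0 < r → r < 1 →
      (1 / (2 * Real.pi)) *
        ∫ θ in (0 : ℝ)..(2 * Real.pi),
          max (Real.log ‖f (r * Complex.exp (θ * Complex.I))‖) 0 ≤ M)
    (F : Finset ℕ) {r : ℝ} (hr0 : 0 < r) (hr1 : r < 1)
    (hrF : ∀ n ∈ F, ‖Z n‖ < r) (hravoid : ∀ n, ‖Z n‖ ≠ r) :
    Real.log r + ∑ n ∈ F, Real.log (r / ‖Z n‖) ≤ M := by
  classical
  push_neg at hnc
  obtain ⟨z₁, hz₁, hfz₁⟩ := hnc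
  have hballr : closedBall (0:ℂ) r ⊆ ball (0:ℂ) 1 := by
    intro z hz
    simp only [mem_closedBall, mem_ball] at hz ⊢
    linarith
  have hfin := zeros_finite hf hz₁ hfz₁ hr1
  set S : Finset ℂ := hfin.toFinset with hSdef
  obtain ⟨L, h, hLmem, hh, hhne, hfac⟩ :=
    remove_zeros hr1 (S.sum (ordNat f)) f S hf ⟨z₁, hz₁, hfz₁⟩
      (fun z hz => ((hfin.mem_toFinset).mp hz).1)
      (fun z hz h0 => (hfin.mem_toFinset).mpr ⟨hz, h0⟩) le_rfl
  have hfzero : ∀ ζ ∈ L, f ζ = 0 := by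
    intro ζ hζ
    rw [hfac ζ]
    have : (0:ℂ) ∈ L.map (fun x => ζ - x) := Multiset.mem_map.mpr ⟨ζ, hζ, sub_self ζ⟩
    rw [Multiset.prod_eq_zero this, zero_mul]
  have hLlt : ∀ ζ ∈ L, ‖ζ‖ < r := by
    intro ζ hζ
    have h1 : ‖ζ‖ ≤ r := by simpa [mem_closedBall, dist_zero_right] using hLmem ζ hζ
    have h2 := (hzeros ζ (hballr (hLmem ζ hζ))).mp (hfzero ζ hζ)
    rcases h2 with rfl | ⟨n, rfl⟩
    · simpa using hr0
    · exact lt_of_le_of_ne h1 (hravoid n)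
  have hmemL : ∀ w ∈ closedBall (0:ℂ) r, f w = 0 → w ∈ L := by
    intro w hw hfw
    rw [hfac w] at hfw
    rcases mul_eq_zero.mp hfw with h1 | h1
    · obtain ⟨ζ, hζL, hζe⟩ := Multiset.mem_map.mp (Multiset.prod_eq_zero_iff.mp h1)
      rwa [sub_eq_zero.mp hζe]
    · exact absurd h1 (hhne w hw)
  have h0L : (0:ℂ) ∈ L :=
    hmemL 0 (by simp [mem_closedBall, hr0.le]) hf0
  obtain ⟨L', hL'⟩ := Multiset.exists_cons_of_mem h0L
  -- P and normalization
  set P : ℂ → ℂ := fun z => ((L'.map (fun ζ => z - ζ)).prod) * h z with hPdef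
  have hfzP : ∀ z, f z = z * P z := by
    intro z
    rw [hfac z, hL', Multiset.map_cons, Multiset.prod_cons, hPdef]
    ring
  have h0mem : (0:ℂ) ∈ ball (0:ℂ) 1 := by simp
  have hPdiffAt : DifferentiableAt ℂ P 0 := by
    apply DifferentiableAt.mul
    · exact (mprod_diff (fun ζ z => z - ζ) (fun ζ => differentiable_id.sub_const ζ) L').differentiableAt
    · exact hh.differentiableAt (isOpen_ball.mem_nhds h0mem)
  have hP0 : P 0 = 1 := by
    have hd : HasDerivAt (fun z => z * P z) (1 * P 0 + 0 * deriv P 0) 0 :=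
      (hasDerivAt_id 0).mul hPdiffAt.hasDerivAt
    have hfP : deriv f 0 = P 0 := by
      rw [show f = fun z => z * P z from funext hfzP]
      rw [hd.deriv]
      ring
    rw [← hfP, hf'0]
  have hL'ne : ∀ ζ ∈ L', ζ ≠ 0 := by
    intro ζ hζ hζ0
    apply one_ne_zero (α := ℂ)
    rw [← hP0]
    have hmem0 : (0:ℂ) ∈ L'.map (fun x => (0:ℂ) - x) :=
      Multiset.mem_map.mpr ⟨ζ, hζ, by rw [hζ0, sub_zero]⟩
    show (Multiset.map (fun x => (0:ℂ) - x) L').prod * h 0 = 0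
    rw [Multiset.prod_eq_zero hmem0, zero_mul]
  have hL'lt : ∀ ζ ∈ L', ‖ζ‖ < r := fun ζ hζ => hLlt ζ (hL' ▸ Multiset.mem_cons_of_mem hζ)
  have hnorm1 : (L'.map (fun ζ => ‖ζ‖)).prod * ‖h 0‖ = 1 := by
    have := congrArg (fun w : ℂ => ‖w‖) hP0
    simp only [norm_one] at this
    rw [hPdef] at this
    rw [← this, norm_mul, mnorm_prod, Multiset.map_map]
    congr 2
    ext ζ
    simp
  -- the Blaschke-modified function
  set g : ℂ → ℂ := fun z => h z * ((L.map (fun ζ => (((r:ℂ))^2 - (starRingEnd ℂ) ζ * z) / r)).prod) with hgdef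
  have hrC : ((r:ℂ)) ≠ 0 := by exact_mod_cast hr0.ne'
  have hgdiff : DifferentiableOn ℂ g (ball (0:ℂ) 1) := by
    apply hh.mul
    exact (mprod_diff (fun ζ z => (((r:ℂ))^2 - (starRingEnd ℂ) ζ * z) / r)
      (fun ζ => ((differentiable_const _).sub ((differentiable_const _).mul differentiable_id)).div_const _) L).differentiableOn
  have hgne : ∀ z ∈ closedBall (0:ℂ) r, g z ≠ 0 := by
    intro z hz
    apply mul_ne_zero (hhne z hz)
    rw [Ne, Multiset.prod_eq_zero_iff]
    rintro hmem
    obtain ⟨ζ, hζL, hζe⟩ := Multiset.mem_map.mp hmem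
    rw [div_eq_zero_iff] at hζe
    rcases hζe with hζe | hζe
    · have h1 : ‖(starRingEnd ℂ) ζ * z‖ < r^2 := by
        rw [norm_mul, RCLike.norm_conj]
        calc ‖ζ‖ * ‖z‖ ≤ ‖ζ‖ * r := by
              apply mul_le_mul_of_nonneg_left _ (norm_nonneg ζ)
              simpa [mem_closedBall, dist_zero_right] using hz
        _ < r * r := by
              apply mul_lt_mul_of_pos_right (hLlt ζ hζL) hr0
        _ = r^2 := by ring
      have h2 : ((r:ℂ))^2 = (starRingEnd ℂ) ζ * z := by linear_combination hζe
      rw [← h2] at h1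
      simp only [norm_pow, Complex.norm_real, Real.norm_eq_abs, abs_of_pos hr0] at h1
      exact lt_irrefl _ h1
    · exact hrC hζe
  -- find a slightly larger radius R
  set V : Set ℂ := ball (0:ℂ) 1 ∩ g ⁻¹' {(0:ℂ)}ᶜ with hVdef
  have hVopen : IsOpen V :=
    hgdiff.continuousOn.isOpen_inter_preimage isOpen_ball isOpen_compl_singleton
  have hcV : closedBall (0:ℂ) r ⊆ V := fun z hz => ⟨hballr hz, hgne z hz⟩
  obtain ⟨δ, hδ0, hδsub⟩ :=
    (isCompact_closedBall (0:ℂ) r).exists_thickening_subset_open hVopen hcV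
  set R : ℝ := min (r + δ/2) ((r+1)/2) with hRdef
  have hrR : r < R := by
    apply lt_min (by linarith) (by linarith)
  have hRV : ball (0:ℂ) R ⊆ V := by
    intro z hz
    simp only [mem_ball, dist_zero_right] at hz
    have hzR : ‖z‖ < r + δ/2 := lt_of_lt_of_le hz (min_le_left _ _)
    rcases le_or_gt ‖z‖ r with hle | hlt
    · exact hδsub (self_subset_thickening hδ0 _ (by simpa [mem_closedBall, dist_zero_right] using hle))
    · apply hδsub
      rw [mem_thickening_iff]
      refine ⟨((r/‖z‖ : ℝ) : ℂ) * z, ?_, ?_⟩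
      · have hz0' : ‖z‖ ≠ 0 := (lt_trans hr0 hlt).ne'
        rw [mem_closedBall, dist_zero_right, norm_mul, Complex.norm_real, Real.norm_eq_abs,
          abs_of_pos (div_pos hr0 (lt_trans hr0 hlt)), div_mul_cancel₀ r hz0']
      · have hz0 : (0:ℝ) < ‖z‖ := lt_trans hr0 hlt
        have : z - ((r/‖z‖ : ℝ) : ℂ) * z = ((1 - r/‖z‖ : ℝ) : ℂ) * z := by
          push_cast
          ring
        rw [dist_eq_norm, this, norm_mul, Complex.norm_real, Real.norm_eq_abs,
          abs_of_pos (by rw [sub_pos]; rw [div_lt_one hz0]; exact hlt)]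
        have h5 : (1 - r/‖z‖) * ‖z‖ = ‖z‖ - r := by
          rw [sub_mul, one_mul, div_mul_cancel₀ r hz0.ne']
        rw [h5]
        linarith
  have hmean := log_mean hr0 hrR (hgdiff.mono (fun z hz => (hRV hz).1))
    (fun z hz => (hRV hz).2)
  -- compute log ‖g 0‖
  set lφ : ℂ → ℝ := fun ζ => Real.log (r / ‖ζ‖) with hlφdef
  have hg0norm : Real.log ‖g 0‖ = Real.log r + ((L'.map lφ).sum) := by
    have h1 : g 0 = h 0 * ((r:ℂ)) ^ (Multiset.card L) := by
      show h 0 * ((L.map (fun ζ => (((r:ℂ))^2 - (starRingEnd ℂ) ζ * 0) / r)).prod) = _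
      congr 1
      have h2 : L.map (fun ζ => (((r:ℂ))^2 - (starRingEnd ℂ) ζ * 0) / r)
          = L.map (fun _ => ((r:ℂ))) := by
        apply Multiset.map_congr rfl
        intro ζ _
        rw [mul_zero, sub_zero, sq, mul_div_assoc, div_self hrC, mul_one]
      rw [h2, Multiset.map_const', Multiset.prod_replicate]
    have hh0 : ‖h 0‖ ≠ 0 :=
      norm_ne_zero_iff.mpr (hhne 0 (by simp [mem_closedBall, hr0.le]))
    have hprodpos : ∀ x ∈ L'.map (fun ζ => ‖ζ‖), x ≠ 0 := by
      intro x hx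
      obtain ⟨ζ, hζ, rfl⟩ := Multiset.mem_map.mp hx
      exact norm_ne_zero_iff.mpr (hL'ne ζ hζ)
    have hlogh0 : Real.log ‖h 0‖ = -((L'.map (fun ζ => Real.log ‖ζ‖)).sum) := by
      have h3 : ‖h 0‖ = ((L'.map (fun ζ => ‖ζ‖)).prod)⁻¹ :=
        (inv_eq_of_mul_eq_one_right hnorm1).symm
      rw [h3, Real.log_inv, mlog_prod _ hprodpos, Multiset.map_map]
      rfl
    have hcard : (Multiset.card L) = (Multiset.card L') + 1 := by
      rw [hL', Multiset.card_cons]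
    have h4 : (L'.map lφ) = L'.map (fun ζ => Real.log r - Real.log ‖ζ‖) := by
      apply Multiset.map_congr rfl
      intro ζ hζ
      exact Real.log_div hr0.ne' (norm_ne_zero_iff.mpr (hL'ne ζ hζ))
    rw [h1, norm_mul, norm_pow, Complex.norm_real, Real.norm_eq_abs, abs_of_pos hr0,
      Real.log_mul hh0 (pow_ne_zero _ hr0.ne'), Real.log_pow, hlogh0, hcard, h4,
      msum_sub]
    push_cast
    ring
  -- equality of norms on the circle
  have hcmem : ∀ θ : ℝ, circleMap 0 r θ ∈ closedBall (0:ℂ) r := by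
    intro θ
    simp only [mem_closedBall, dist_zero_right]
    rw [norm_circleMap_zero, abs_of_pos hr0]
  have hcircnorm : ∀ θ : ℝ, ‖g (circleMap 0 r θ)‖ = ‖f (circleMap 0 r θ)‖ := by
    intro θ
    set z := circleMap 0 r θ with hzdef
    have hzn : ‖z‖ = r := by
      rw [hzdef, norm_circleMap_zero, abs_of_pos hr0]
    have hkey : ∀ ζ : ℂ, ‖(((r:ℂ))^2 - (starRingEnd ℂ) ζ * z) / r‖ = ‖z - ζ‖ := by
      intro ζ
      have hzz : ((r:ℂ))^2 = z * (starRingEnd ℂ) z := by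
        rw [Complex.mul_conj, Complex.normSq_eq_norm_sq]
        rw [show ‖z‖ = r from hzn]
        push_cast
        ring
      have hnum : ((r:ℂ))^2 - (starRingEnd ℂ) ζ * z = z * (starRingEnd ℂ) (z - ζ) := by
        rw [map_sub, hzz]
        ring
      rw [hnum, norm_div, norm_mul, RCLike.norm_conj, hzn, Complex.norm_real,
        Real.norm_eq_abs, abs_of_pos hr0, mul_comm, mul_div_assoc, div_self hr0.ne',
        mul_one]
    have h5 : (L.map (fun ζ => (((r:ℂ))^2 - (starRingEnd ℂ) ζ * z) / r)).map (fun w => ‖w‖)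
        = L.map (fun ζ => ‖z - ζ‖) := by
      rw [Multiset.map_map]
      exact Multiset.map_congr rfl (fun ζ _ => hkey ζ)
    have h6 : (L.map (fun ζ => z - ζ)).map (fun w => ‖w‖) = L.map (fun ζ => ‖z - ζ‖) :=
      Multiset.map_map _ _ _
    rw [hgdef, hfac z]
    simp only [norm_mul]
    rw [mnorm_prod, mnorm_prod, h5, h6, mul_comm]
  -- continuity and integrability
  have hgc_cont : Continuous (fun θ : ℝ => g (circleMap 0 r θ)) :=
    hgdiff.continuousOn.comp_continuous (continuous_circleMap 0 r)
      (fun θ => hballr (hcmem θ))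
  have hlogg_cont : Continuous (fun θ : ℝ => Real.log ‖g (circleMap 0 r θ)‖) := by
    rw [continuous_iff_continuousAt]
    intro θ
    have hc1 : ContinuousAt Real.log ‖g (circleMap 0 r θ)‖ :=
      Real.continuousAt_log (norm_ne_zero_iff.mpr (hgne _ (hcmem θ)))
    have hc2 : ContinuousAt (fun x : ℝ => ‖g (circleMap 0 r x)‖) θ :=
      (hgc_cont.norm).continuousAt
    exact ContinuousAt.comp (g := Real.log) (f := fun x : ℝ => ‖g (circleMap 0 r x)‖) hc1 hc2
  have heqfun : (fun θ : ℝ => Real.log ‖f (circleMap 0 r θ)‖)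
      = (fun θ : ℝ => Real.log ‖g (circleMap 0 r θ)‖) :=
    funext fun θ => by rw [hcircnorm θ]
  have h_int1 : IntervalIntegrable (fun θ : ℝ => Real.log ‖f (circleMap 0 r θ)‖)
      MeasureTheory.volume 0 (2*Real.pi) := by
    rw [heqfun]
    exact hlogg_cont.intervalIntegrable _ _
  have h_int2 : IntervalIntegrable (fun θ : ℝ => max (Real.log ‖f (circleMap 0 r θ)‖) 0)
      MeasureTheory.volume 0 (2*Real.pi) := by
    rw [show (fun θ : ℝ => max (Real.log ‖f (circleMap 0 r θ)‖) 0)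
        = (fun θ : ℝ => max (Real.log ‖g (circleMap 0 r θ)‖) 0) from
      funext fun θ => by rw [hcircnorm θ]]
    exact (hlogg_cont.max continuous_const).intervalIntegrable _ _
  have h2pi : (0:ℝ) < 2 * Real.pi := Real.two_pi_pos
  have hmono : (∫ θ in (0:ℝ)..(2*Real.pi), Real.log ‖f (circleMap 0 r θ)‖)
      ≤ ∫ θ in (0:ℝ)..(2*Real.pi), max (Real.log ‖f (circleMap 0 r θ)‖) 0 :=
    intervalIntegral.integral_mono_on h2pi.le h_int1 h_int2 (fun x _ => le_max_left _ _)
  have hIf : (∫ θ in (0:ℝ)..(2*Real.pi), Real.log ‖f (circleMap 0 r θ)‖)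
      = 2 * Real.pi * Real.log ‖g 0‖ := by
    rw [heqfun, hmean]
  have hMr := hM r hr0 hr1
  have hMr' : (∫ θ in (0:ℝ)..(2*Real.pi), max (Real.log ‖f (circleMap 0 r θ)‖) 0)
      ≤ 2 * Real.pi * M := by
    have hcm : ∀ θ : ℝ, circleMap 0 r θ = (r:ℂ) * Complex.exp (θ * Complex.I) := by
      intro θ; simp [circleMap]
    rw [show (fun θ : ℝ => max (Real.log ‖f (circleMap 0 r θ)‖) 0)
        = (fun θ : ℝ => max (Real.log ‖f ((r:ℂ) * Complex.exp (θ * Complex.I))‖) 0) from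
      funext fun θ => by rw [hcm θ]]
    have := hMr
    rw [show (1:ℝ) / (2 * Real.pi) * (∫ θ in (0:ℝ)..(2*Real.pi),
        max (Real.log ‖f ((r:ℂ) * Complex.exp (θ * Complex.I))‖) 0)
        = (∫ θ in (0:ℝ)..(2*Real.pi),
        max (Real.log ‖f ((r:ℂ) * Complex.exp (θ * Complex.I))‖) 0) / (2 * Real.pi) from by
      ring] at this
    rw [div_le_iff₀ h2pi] at this
    linarith
  have hlogg0 : Real.log ‖g 0‖ ≤ M := by
    have := hIf ▸ (hmono.trans hMr')
    nlinarith
  -- compare sum over F with sum over L'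
  classical
  set sF : Multiset ℂ := F.val.map Z with hsFdef
  have hnodup : sF.Nodup := F.nodup.map hZinj
  have hsFL : sF ≤ L' := by
    rw [Multiset.le_iff_count]
    intro a
    by_cases hmem : a ∈ sF
    · have hc1 : Multiset.count a sF ≤ 1 := Multiset.nodup_iff_count_le_one.mp hnodup a
      obtain ⟨n, hn, rfl⟩ := Multiset.mem_map.mp hmem
      have hnF : n ∈ F := hn
      have hZnL : Z n ∈ L := by
        apply hmemL (Z n) (by simpa [mem_closedBall, dist_zero_right] using (hrF n hnF).le)
        exact (hzeros _ (hZmem n)).mpr (Or.inr ⟨n, rfl⟩)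
      have hZnL' : Z n ∈ L' := by
        rw [hL'] at hZnL
        rcases Multiset.mem_cons.mp hZnL with h1 | h1
        · exact absurd h1 (hZne n)
        · exact h1
      calc Multiset.count (Z n) sF ≤ 1 := hc1
        _ ≤ Multiset.count (Z n) L' := Multiset.one_le_count_iff_mem.mpr hZnL'
    · rw [Multiset.count_eq_zero_of_notMem hmem]
      exact Nat.zero_le _
  obtain ⟨u, hu⟩ := Multiset.le_iff_exists_add.mp hsFL
  have hFsum : (∑ n ∈ F, Real.log (r / ‖Z n‖)) = (sF.map lφ).sum := by
    rw [hsFdef, Multiset.map_map]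
    rfl
  have husum : (0:ℝ) ≤ (u.map lφ).sum := by
    apply Multiset.sum_nonneg
    intro x hx
    obtain ⟨ζ, hζ, rfl⟩ := Multiset.mem_map.mp hx
    have hζL' : ζ ∈ L' := by rw [hu]; exact Multiset.mem_add.mpr (Or.inr hζ)
    have hζpos : (0:ℝ) < ‖ζ‖ := norm_pos_iff.mpr (hL'ne ζ hζL')
    apply Real.log_nonneg
    rw [le_div_iff₀ hζpos, one_mul]
    exact (hL'lt ζ hζL').le
  have hsplit : ((L'.map lφ).sum) = (sF.map lφ).sum + (u.map lφ).sum := by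
    rw [hu, Multiset.map_add, Multiset.sum_add]
  rw [hFsum]
  have : Real.log r + (sF.map lφ).sum ≤ Real.log r + ((L'.map lφ).sum) := by
    rw [hsplit]; linarith
  calc Real.log r + (sF.map lφ).sum ≤ Real.log r + ((L'.map lφ).sum) := this
    _ = Real.log ‖g 0‖ := hg0norm.symm
    _ ≤ M := hlogg0

/-- Blaschke-type bound via Jensen's formula: if `f` is holomorphic on the unit disc with
a simple zero at `0` (`f(0)=0`, `f'(0)=1`), its other zeros are the (distinct) points
`Z n ≠ 0`, and the Nevanlinna proximity function is bounded by `M`, then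
`Σ (1 - |Z n|) ≤ M`. -/
theorem blaschke_sum_le_of_proximity_bound
    (f : ℂ → ℂ) (Z : ℕ → ℂ) (M : ℝ)
    (hf : DifferentiableOn ℂ f (ball (0 : ℂ) 1))
    (hnc : ¬ ∀ z ∈ ball (0 : ℂ) 1, f z = 0)
    (hf0 : f 0 = 0) (hf'0 : deriv f 0 = 1)
    (hZmem : ∀ n, Z n ∈ ball (0 : ℂ) 1) (hZne : ∀ n, Z n ≠ 0)
    (hZinj : Function.Injective Z)
    (hzeros : ∀ z ∈ ball (0 : ℂ) 1, (f z = 0 ↔ z = 0 ∨ z ∈ Set.range Z))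
    (hM : ∀ r : ℝ, 0 < r → r < 1 →
      (1 / (2 * Real.pi)) *
        ∫ θ in (0 : ℝ)..(2 * Real.pi),
          max (Real.log ‖f (r * Complex.exp (θ * Complex.I))‖) 0 ≤ M) :
    ∑' n, (1 - ‖Z n‖) ≤ M := by
  classical
  -- existence of good radii
  have hgood : ∀ a : ℝ, a < 1 → ∃ ρ, a < ρ ∧ ρ < 1 ∧ ∀ n, ‖Z n‖ ≠ ρ := by
    intro a ha
    have hnsub : ¬ (Set.Ioo a 1 ⊆ Set.range (fun n => ‖Z n‖)) := by
      intro hsub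
      have h1 : MeasureTheory.volume (Set.Ioo a 1) ≤
          MeasureTheory.volume (Set.range (fun n => ‖Z n‖)) :=
        MeasureTheory.measure_mono hsub
      rw [(Set.countable_range _).measure_zero, Real.volume_Ioo] at h1
      have h2 : (0:ℝ) < 1 - a := by linarith
      rw [← ENNReal.ofReal_zero, ENNReal.ofReal_le_ofReal_iff le_rfl] at h1
      linarith
    obtain ⟨ρ, hρIoo, hρbad⟩ := Set.not_subset.mp hnsub
    refine ⟨ρ, hρIoo.1, hρIoo.2, fun n hn => hρbad ⟨n, hn⟩⟩
  -- bound on finite partial sums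
  have hFbound : ∀ F : Finset ℕ, ∑ n ∈ F, (1 - ‖Z n‖) ≤ M := by
    intro F
    set b : NNReal := F.sup (fun n => ‖Z n‖₊) with hbdef
    have hb1 : (b:ℝ) < 1 := by
      rw [show (1:ℝ) = ((1:NNReal):ℝ) from rfl, NNReal.coe_lt_coe]
      apply Finset.sup_lt_iff (by norm_num : (⊥ : NNReal) < 1) |>.mpr
      intro n _
      rw [← NNReal.coe_lt_coe]
      simpa [mem_ball, dist_zero_right] using hZmem n
    have hbF : ∀ n ∈ F, ‖Z n‖ ≤ (b:ℝ) := by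
      intro n hn
      exact_mod_cast NNReal.coe_le_coe.mpr (Finset.le_sup (f := fun n => ‖Z n‖₊) hn)
    -- choose a sequence of good radii tending to 1
    have hak : ∀ k : ℕ, (max (b:ℝ) (max (1 - 1/(k+1)) (1/2))) < 1 := by
      intro k
      apply max_lt hb1
      apply max_lt _ (by norm_num)
      have : (0:ℝ) < 1/(k+1) := by positivity
      linarith
    choose ρ hρ1 hρ2 hρ3 using fun k : ℕ => hgood _ (hak k)
    have hρ0 : ∀ k, 0 < ρ k := fun k =>
      lt_of_le_of_lt (by norm_num) (lt_of_le_of_lt (le_max_of_le_right (le_max_right _ _)) (hρ1 k))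
    have hkey : ∀ k, Real.log (ρ k) + ∑ n ∈ F, Real.log (ρ k / ‖Z n‖) ≤ M := by
      intro k
      apply jensen_key f Z M hf hnc hf0 hf'0 hZmem hZne hZinj hzeros hM F (hρ0 k) (hρ2 k)
        _ (hρ3 k)
      intro n hn
      calc ‖Z n‖ ≤ (b:ℝ) := hbF n hn
        _ ≤ max (b:ℝ) (max (1 - 1/(k+1)) (1/2)) := le_max_left _ _
        _ < ρ k := hρ1 k
    -- limits
    have hρtend : Filter.Tendsto ρ Filter.atTop (nhds 1) := by
      have hlow : Filter.Tendsto (fun k : ℕ => 1 - 1/((k:ℝ)+1)) Filter.atTop (nhds 1) := by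
        have := tendsto_one_div_add_atTop_nhds_zero_nat (𝕜 := ℝ)
        have h2 := (tendsto_const_nhds (x := (1:ℝ)) (f := Filter.atTop (α := ℕ))).sub this
        simpa using h2
      apply tendsto_of_tendsto_of_tendsto_of_le_of_le hlow tendsto_const_nhds
      · intro k
        calc (1:ℝ) - 1/((k:ℝ)+1) ≤ max (b:ℝ) (max (1 - 1/(k+1)) (1/2)) :=
            le_max_of_le_right (le_max_left _ _)
          _ ≤ ρ k := (hρ1 k).le
      · exact fun k => (hρ2 k).le
    have hlogtend : Filter.Tendsto (fun k => Real.log (ρ k)) Filter.atTop (nhds 0) := by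
      have := (Real.continuousAt_log (one_ne_zero)).tendsto.comp hρtend
      simpa [Function.comp_def] using this
    have hsumtend : Filter.Tendsto
        (fun k => Real.log (ρ k) + ∑ n ∈ F, Real.log (ρ k / ‖Z n‖)) Filter.atTop
        (nhds (0 + ∑ n ∈ F, (0 - Real.log ‖Z n‖))) := by
      apply Filter.Tendsto.add hlogtend
      apply tendsto_finset_sum
      intro n hn
      have h1 := hlogtend.sub (tendsto_const_nhds (x := Real.log ‖Z n‖))
      apply h1.congr
      intro k
      rw [Real.log_div (hρ0 k).ne' (norm_ne_zero_iff.mpr (hZne n))]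
    have hlim : (0:ℝ) + ∑ n ∈ F, (0 - Real.log ‖Z n‖) ≤ M :=
      le_of_tendsto' hsumtend hkey
    have hterm : ∀ n ∈ F, 1 - ‖Z n‖ ≤ 0 - Real.log ‖Z n‖ := by
      intro n _
      have h1 : Real.log ‖Z n‖ ≤ ‖Z n‖ - 1 :=
        Real.log_le_sub_one_of_pos (norm_pos_iff.mpr (hZne n))
      linarith
    calc ∑ n ∈ F, (1 - ‖Z n‖) ≤ ∑ n ∈ F, (0 - Real.log ‖Z n‖) :=
        Finset.sum_le_sum hterm
      _ ≤ M := by linarith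
  -- conclude
  have hnn : ∀ n, 0 ≤ 1 - ‖Z n‖ := by
    intro n
    have := hZmem n
    simp only [mem_ball, dist_zero_right] at this
    linarith
  have hsummable : Summable (fun n => 1 - ‖Z n‖) :=
    summable_of_sum_le hnn hFbound
  exact Summable.tsum_le_of_sum_le hsummable hFbound
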